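/- arXiv:2207.05180 — 4 statements merged into one kernel-verified Lean document; each statement's English description precedes it below -/
import Mathlib

section
/- (Theorem 2, stationarity.) Let G be a finite simple graph on a nonempty finite vertex set V with deg(u) ≥ 1 for all u, let K be a positive real with deg(u) ≤ K for all u, let P(u,v) = 1/K if u,v adjacent, P(u,u) = 1 − deg(u)/K, 0 otherwise, and let Q(u,v) = 1/deg(u) if u,v adjacent, 0 otherwise. For a,b ∈ V set κ(a,b) = min{1, deg(a)/deg(b)}, and define the coupled transition matrix T on V × V by T((u₁,u₂),(v₁,v₂)) = P(u₁,v₁)·Q(u₂,v₂)·(1 − κ(v₁,v₂)) + P(u₁,v₂)·Q(u₂,v₁)·κ(v₂,v₁). Then T is a stochastic matrix on V × V, and the product distribution μ(v₁,v₂) = (1/|V|)·(deg(v₂)/Σ_{w∈V} deg(w)) is stationary for T: Σ_{(u₁,u₂)} μ(u₁,u₂)·T((u₁,u₂),(v₁,v₂)) = μ(v₁,v₂) for all (v₁,v₂). -/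
/-- Theorem 2, stationarity: the Metropolis-coupled transition matrix `T` on
`V × V` is stochastic and the product of the uniform distribution and the
degree distribution is stationary for it. -/
theorem coupled_chain_stochastic_stationary
    {V : Type*} [Fintype V] [DecidableEq V] [Nonempty V]
    (G : SimpleGraph V) [DecidableRel G.Adj]
    (hdeg : ∀ u : V, 1 ≤ G.degree u)
    (K : ℝ) (hK : 0 < K) (hdegK : ∀ u : V, (G.degree u : ℝ) ≤ K)
    (P : V → V → ℝ)
    (hP : ∀ u v : V, P u v =
      if G.Adj u v then 1 / K
      else if u = v then 1 - (G.degree u : ℝ) / K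
      else 0)
    (Q : V → V → ℝ)
    (hQ : ∀ u v : V, Q u v = if G.Adj u v then 1 / (G.degree u : ℝ) else 0)
    (κ : V → V → ℝ)
    (hκ : ∀ a b : V, κ a b = min 1 ((G.degree a : ℝ) / (G.degree b : ℝ)))
    (T : V × V → V × V → ℝ)
    (hT : ∀ u₁ u₂ v₁ v₂ : V, T (u₁, u₂) (v₁, v₂) =
      P u₁ v₁ * Q u₂ v₂ * (1 - κ v₁ v₂) + P u₁ v₂ * Q u₂ v₁ * κ v₂ v₁)
    (μ : V × V → ℝ)
    (hμ : ∀ v₁ v₂ : V, μ (v₁, v₂) =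
      (1 / (Fintype.card V : ℝ)) *
        ((G.degree v₂ : ℝ) / ∑ w : V, (G.degree w : ℝ))) :
    (∀ x y : V × V, 0 ≤ T x y) ∧ (∀ x : V × V, ∑ y : V × V, T x y = 1) ∧
    (∀ y : V × V, ∑ x : V × V, μ x * T x y = μ y) := by
  have hdpos : ∀ u : V, (0 : ℝ) < (G.degree u : ℝ) := fun u => by
    exact_mod_cast Nat.lt_of_lt_of_le Nat.zero_lt_one (hdeg u)
  -- nonnegativity / bounds
  have hPnn : ∀ u v : V, 0 ≤ P u v := by
    intro u v
    rw [hP]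
    split_ifs with h1 h2
    · positivity
    · have h3 : (G.degree u : ℝ) / K ≤ 1 := by
        rw [div_le_one hK]; exact hdegK u
      linarith
    · exact le_refl 0
  have hQnn : ∀ u v : V, 0 ≤ Q u v := by
    intro u v
    rw [hQ]
    split_ifs
    · positivity
    · exact le_refl 0
  have hκnn : ∀ a b : V, 0 ≤ κ a b := by
    intro a b
    rw [hκ]
    exact le_min zero_le_one (le_of_lt (div_pos (hdpos a) (hdpos b)))
  have hκle : ∀ a b : V, κ a b ≤ 1 := by
    intro a b; rw [hκ]; exact min_le_left _ _
  -- sums of functions supported on neighbours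
  have hadj : ∀ (u : V) (f : V → ℝ),
      (∑ v : V, if G.Adj u v then f v else 0) = ∑ v ∈ G.neighborFinset u, f v := by
    intro u f
    rw [← Finset.sum_filter, SimpleGraph.neighborFinset_eq_filter]
  -- row sums of P and Q
  have hPsplit : ∀ u v : V, P u v =
      (if G.Adj u v then 1 / K else 0)
        + (if u = v then 1 - (G.degree u : ℝ) / K else 0) := by
    intro u v
    rw [hP]
    by_cases h : G.Adj u v
    · simp [h, G.ne_of_adj h]
    · by_cases h2 : u = v <;> simp [h, h2]
  have hPsum : ∀ u : V, ∑ v : V, P u v = 1 := by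
    intro u
    simp only [hPsplit]
    rw [Finset.sum_add_distrib, hadj u (fun _ => 1 / K), Finset.sum_const,
      SimpleGraph.card_neighborFinset_eq_degree, Finset.sum_ite_eq]
    simp only [Finset.mem_univ, if_true, nsmul_eq_mul]
    field_simp
    ring
  have hQsum : ∀ u : V, ∑ v : V, Q u v = 1 := by
    intro u
    simp only [hQ]
    rw [hadj u (fun _ => 1 / (G.degree u : ℝ)), Finset.sum_const,
      SimpleGraph.card_neighborFinset_eq_degree, nsmul_eq_mul]
    field_simp
    exact div_self (ne_of_gt (hdpos u))
  -- symmetry of P and column sums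
  have hPsym : ∀ u v : V, P u v = P v u := by
    intro u v
    rw [hP, hP]
    by_cases h : G.Adj u v
    · rw [if_pos h, if_pos h.symm]
    · have h' : ¬ G.Adj v u := fun hh => h hh.symm
      rw [if_neg h, if_neg h']
      by_cases h2 : u = v
      · subst h2; rfl
      · rw [if_neg h2, if_neg (Ne.symm h2)]
  have hPcol : ∀ v : V, ∑ u : V, P u v = 1 := by
    intro v
    calc ∑ u : V, P u v = ∑ u : V, P v u := Finset.sum_congr rfl fun u _ => hPsym u v
      _ = 1 := hPsum v
  -- detailed balance for κ
  have hbal : ∀ a b : V, (G.degree a : ℝ) * κ b a = (G.degree b : ℝ) * κ a b := by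
    intro a b
    rw [hκ, hκ]
    rcases le_total ((G.degree a : ℝ)) ((G.degree b : ℝ)) with h | h
    · have h1 : min 1 ((G.degree b : ℝ) / (G.degree a : ℝ)) = 1 :=
        min_eq_left (by rw [le_div_iff₀ (hdpos a)]; linarith)
      have h2 : min 1 ((G.degree a : ℝ) / (G.degree b : ℝ))
          = (G.degree a : ℝ) / (G.degree b : ℝ) :=
        min_eq_right (by rw [div_le_one (hdpos b)]; exact h)
      rw [h1, h2, mul_one, mul_div_cancel₀ _ (ne_of_gt (hdpos b))]
    · have h1 : min 1 ((G.degree a : ℝ) / (G.degree b : ℝ)) = 1 :=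
        min_eq_left (by rw [le_div_iff₀ (hdpos b)]; linarith)
      have h2 : min 1 ((G.degree b : ℝ) / (G.degree a : ℝ))
          = (G.degree b : ℝ) / (G.degree a : ℝ) :=
        min_eq_right (by rw [div_le_one (hdpos a)]; exact h)
      rw [h1, h2, mul_one, mul_div_cancel₀ _ (ne_of_gt (hdpos a))]
  -- the stationary marginal
  set S : ℝ := ∑ w : V, (G.degree w : ℝ) with hS
  set n : ℝ := (Fintype.card V : ℝ) with hn
  set m : V → ℝ := fun v => (1 / n) * ((G.degree v : ℝ) / S) with hm
  have hμm : ∀ v₁ v₂ : V, μ (v₁, v₂) = m v₂ := fun v₁ v₂ => hμ v₁ v₂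
  -- weighted column sum of Q
  have hQw : ∀ v : V, ∑ u : V, m u * Q u v = m v := by
    intro v
    have hterm : ∀ u : V, m u * Q u v =
        if G.Adj v u then (1 / n) * ((1 : ℝ) / S) else 0 := by
      intro u
      rw [hQ]
      by_cases h : G.Adj u v
      · rw [if_pos h, if_pos h.symm, hm]
        simp only
        have hdne : (G.degree u : ℝ) ≠ 0 := ne_of_gt (hdpos u)
        field_simp
      · have h' : ¬ G.Adj v u := fun hh => h hh.symm
        rw [if_neg h, if_neg h', mul_zero]
    rw [Finset.sum_congr rfl fun u _ => hterm u,
      hadj v (fun _ => (1 / n) * ((1 : ℝ) / S)), Finset.sum_const,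
      SimpleGraph.card_neighborFinset_eq_degree, nsmul_eq_mul, hm]
    ring
  refine ⟨?_, ?_, ?_⟩
  · -- nonnegativity of T
    rintro ⟨u₁, u₂⟩ ⟨v₁, v₂⟩
    rw [hT]
    have h1 : 0 ≤ 1 - κ v₁ v₂ := by linarith [hκle v₁ v₂]
    have := hκnn v₂ v₁
    have := hPnn u₁ v₁; have := hPnn u₁ v₂
    have := hQnn u₂ v₂; have := hQnn u₂ v₁
    positivity
  · -- row sums of T
    rintro ⟨u₁, u₂⟩
    rw [Fintype.sum_prod_type]
    calc ∑ v₁ : V, ∑ v₂ : V, T (u₁, u₂) (v₁, v₂)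
        = (∑ v₁ : V, ∑ v₂ : V, P u₁ v₁ * Q u₂ v₂ * (1 - κ v₁ v₂))
            + ∑ v₁ : V, ∑ v₂ : V, P u₁ v₂ * Q u₂ v₁ * κ v₂ v₁ := by
          simp_rw [hT]
          rw [← Finset.sum_add_distrib]
          exact Finset.sum_congr rfl fun v₁ _ => Finset.sum_add_distrib
      _ = (∑ v₁ : V, ∑ v₂ : V, P u₁ v₁ * Q u₂ v₂ * (1 - κ v₁ v₂))
            + ∑ v₂ : V, ∑ v₁ : V, P u₁ v₂ * Q u₂ v₁ * κ v₂ v₁ := by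
          congr 1
          exact Finset.sum_comm
      _ = ∑ v₁ : V, ∑ v₂ : V,
            (P u₁ v₁ * Q u₂ v₂ * (1 - κ v₁ v₂) + P u₁ v₁ * Q u₂ v₂ * κ v₁ v₂) := by
          rw [← Finset.sum_add_distrib]
          exact Finset.sum_congr rfl fun v₁ _ => Finset.sum_add_distrib.symm
      _ = ∑ v₁ : V, ∑ v₂ : V, P u₁ v₁ * Q u₂ v₂ := by
          refine Finset.sum_congr rfl fun v₁ _ => Finset.sum_congr rfl fun v₂ _ => ?_
          ring
      _ = (∑ v₁ : V, P u₁ v₁) * ∑ v₂ : V, Q u₂ v₂ := (Finset.sum_mul_sum _ _ _ _).symm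
      _ = 1 := by rw [hPsum, hQsum, one_mul]
  · -- stationarity
    rintro ⟨v₁, v₂⟩
    rw [Fintype.sum_prod_type]
    calc ∑ u₁ : V, ∑ u₂ : V, μ (u₁, u₂) * T (u₁, u₂) (v₁, v₂)
        = (∑ u₁ : V, ∑ u₂ : V, P u₁ v₁ * (m u₂ * Q u₂ v₂ * (1 - κ v₁ v₂)))
            + ∑ u₁ : V, ∑ u₂ : V, P u₁ v₂ * (m u₂ * Q u₂ v₁ * κ v₂ v₁) := by
          simp_rw [hT, hμm]
          rw [← Finset.sum_add_distrib]
          refine Finset.sum_congr rfl fun u₁ _ => ?_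
          rw [← Finset.sum_add_distrib]
          refine Finset.sum_congr rfl fun u₂ _ => ?_
          ring
      _ = (∑ u₁ : V, P u₁ v₁) * (∑ u₂ : V, m u₂ * Q u₂ v₂ * (1 - κ v₁ v₂))
            + (∑ u₁ : V, P u₁ v₂) * ∑ u₂ : V, m u₂ * Q u₂ v₁ * κ v₂ v₁ := by
          rw [Finset.sum_mul_sum, Finset.sum_mul_sum]
      _ = (∑ u₂ : V, m u₂ * Q u₂ v₂) * (1 - κ v₁ v₂)
            + (∑ u₂ : V, m u₂ * Q u₂ v₁) * κ v₂ v₁ := by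
          rw [hPcol, hPcol, ← Finset.sum_mul, ← Finset.sum_mul, one_mul, one_mul]
      _ = m v₂ * (1 - κ v₁ v₂) + m v₁ * κ v₂ v₁ := by rw [hQw, hQw]
      _ = m v₂ * (1 - κ v₁ v₂) + m v₂ * κ v₁ v₂ := by
          have h := hbal v₁ v₂
          have h2 : m v₁ * κ v₂ v₁ = m v₂ * κ v₁ v₂ := by
            rw [hm]
            simp only
            calc 1 / n * ((G.degree v₁ : ℝ) / S) * κ v₂ v₁
                = ((G.degree v₁ : ℝ) * κ v₂ v₁) * (1 / n * (1 / S)) := by ring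
              _ = ((G.degree v₂ : ℝ) * κ v₁ v₂) * (1 / n * (1 / S)) := by rw [h]
              _ = 1 / n * ((G.degree v₂ : ℝ) / S) * κ v₁ v₂ := by ring
          rw [h2]
      _ = m v₂ := by ring
      _ = μ (v₁, v₂) := (hμm v₁ v₂).symm
end

section
/- (Theorem 2, convergence.) Let G be a finite simple graph on a nonempty finite vertex set V that is connected and non-bipartite, with deg(u) ≥ 1 for all u, let K be a positive real with deg(u) ≤ K for all u, and define P, Q, κ, and the coupled transition matrix T((u₁,u₂),(v₁,v₂)) = P(u₁,v₁)·Q(u₂,v₂)·(1 − κ(v₁,v₂)) + P(u₁,v₂)·Q(u₂,v₁)·κ(v₂,v₁) on V × V as in the coupled chain. Then the coupled Markov chain has the same limiting distribution as the pair of independent chains: for all states x, (v₁,v₂) ∈ V × V, the (x,(v₁,v₂)) entry of T^t converges to (1/|V|)·(deg(v₂)/Σ_{w∈V} deg(w)) as t → ∞. -/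
open Filter Finset

lemma aux_odd_closed_walk {V : Type*} (G : SimpleGraph V)
    [Nonempty V] (hconn : G.Connected) (hnb : ¬ G.Colorable 2) :
    ∃ (z : V) (p : G.Walk z z), Odd p.length := by
  by_contra h
  push_neg at h
  apply hnb
  have hcard : (2 : ℕ) = Fintype.card Bool := by simp
  rw [hcard]
  apply SimpleGraph.Coloring.colorable
  classical
  have root : V := Classical.arbitrary V
  refine SimpleGraph.Coloring.mk (fun v => decide (Odd (G.dist root v))) ?_
  intro u v huv heq
  obtain ⟨pu, hpu⟩ := (hconn root u).exists_walk_length_eq_dist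
  obtain ⟨pv, hpv⟩ := (hconn root v).exists_walk_length_eq_dist
  have hodd : Odd (pu.append ((SimpleGraph.Walk.cons huv SimpleGraph.Walk.nil).append pv.reverse)).length := by
    simp only [SimpleGraph.Walk.length_append, SimpleGraph.Walk.length_cons,
      SimpleGraph.Walk.length_nil, SimpleGraph.Walk.length_reverse, hpu, hpv]
    have : (decide (Odd (G.dist root u))) = decide (Odd (G.dist root v)) := heq
    simp only [decide_eq_decide] at this
    rcases Nat.even_or_odd (G.dist root u) with h1 | h1
    · have h2 : Even (G.dist root v) := by
        rw [← Nat.not_odd_iff_even] at h1 ⊢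
        tauto
      simp only [Nat.odd_iff, Nat.even_iff] at h1 h2 ⊢
      omega
    · have h2 : Odd (G.dist root v) := this.mp h1
      simp only [Nat.odd_iff] at h1 h2 ⊢
      omega
  exact (h _ _) hodd

lemma aux_pad_walk {V : Type*} [Fintype V] [DecidableEq V] (G : SimpleGraph V)
    [DecidableRel G.Adj] (hdeg : ∀ u : V, 1 ≤ G.degree u)
    {u v : V} (p : G.Walk u v) (k : ℕ) :
    ∃ q : G.Walk u v, q.length = p.length + 2 * k := by
  induction k with
  | zero => exact ⟨p, by ring⟩
  | succ k ih =>
    obtain ⟨q, hq⟩ := ih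
    have hw : ∃ w, G.Adj u w := by
      have := hdeg u
      rw [← SimpleGraph.card_neighborFinset_eq_degree] at this
      obtain ⟨w, hw⟩ := Finset.card_pos.mp this
      exact ⟨w, (SimpleGraph.mem_neighborFinset G u w).mp hw⟩
    obtain ⟨w, hw⟩ := hw
    exact ⟨SimpleGraph.Walk.cons hw (SimpleGraph.Walk.cons hw.symm q), by
      simp [SimpleGraph.Walk.length_cons, hq]; ring⟩

lemma aux_uniform_walk {V : Type*} [Fintype V] [DecidableEq V] [Nonempty V]
    (G : SimpleGraph V) [DecidableRel G.Adj]
    (hconn : G.Connected) (hnb : ¬ G.Colorable 2) (hdeg : ∀ u : V, 1 ≤ G.degree u) :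
    ∃ N : ℕ, 0 < N ∧ Even N ∧ ∀ u v : V, ∃ p : G.Walk u v, p.length = N := by
  classical
  obtain ⟨z, c, hc⟩ := aux_odd_closed_walk G hconn hnb
  set D := Finset.sup Finset.univ (fun p : V × V => G.dist p.1 p.2) with hD
  refine ⟨2 * D + c.length + 1, by omega, ?_, ?_⟩
  · rcases hc with ⟨m, hm⟩
    exact ⟨D + m + 1, by omega⟩
  intro u v
  obtain ⟨pu, hpu⟩ := (hconn u z).exists_walk_length_eq_dist
  obtain ⟨pv, hpv⟩ := (hconn z v).exists_walk_length_eq_dist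
  have hau : G.dist u z ≤ D := Finset.le_sup (f := fun p : V × V => G.dist p.1 p.2)
    (Finset.mem_univ (u, z))
  have hav : G.dist z v ≤ D := Finset.le_sup (f := fun p : V × V => G.dist p.1 p.2)
    (Finset.mem_univ (z, v))
  have key : ∀ base : G.Walk u v, base.length ≤ 2 * D + c.length + 1 →
      base.length % 2 = (2 * D + c.length + 1) % 2 →
      ∃ p : G.Walk u v, p.length = 2 * D + c.length + 1 := by
    intro base h1 h2
    obtain ⟨k, hk⟩ : ∃ k, base.length + 2 * k = 2 * D + c.length + 1 := ⟨(2 * D + c.length + 1 - base.length) / 2, by omega⟩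
    obtain ⟨q, hq⟩ := aux_pad_walk G hdeg base k
    exact ⟨q, by omega⟩
  rcases hc with ⟨m, hm⟩
  by_cases hpar : (pu.length + pv.length) % 2 = (2 * D + c.length + 1) % 2
  · refine key (pu.append pv) ?_ ?_ <;>
      simp only [SimpleGraph.Walk.length_append, hpu, hpv] at * <;> omega
  · refine key (pu.append (c.append pv)) ?_ ?_ <;>
      simp only [SimpleGraph.Walk.length_append, hpu, hpv] at * <;> omega

lemma markov_conv {S : Type*} [Fintype S] [DecidableEq S] [Nonempty S]
    (T : Matrix S S ℝ) (hnn : ∀ x y, 0 ≤ T x y) (hrow : ∀ x, ∑ y, T x y = 1)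
    (π : S → ℝ) (hπ1 : ∑ x, π x = 1) (hπnn : ∀ x, 0 ≤ π x)
    (hstat : ∀ y, ∑ x, π x * T x y = π y)
    (N : ℕ) (hNpos : 0 < N) (hpos : ∀ x y, 0 < (T ^ N) x y) :
    ∀ x y, Filter.Tendsto (fun t : ℕ => (T ^ t) x y) Filter.atTop (nhds (π y)) := by
  classical
  have hne : (Finset.univ : Finset S).Nonempty := Finset.univ_nonempty
  have hne2 : (Finset.univ : Finset (S × S)).Nonempty := Finset.univ_nonempty
  -- nonnegativity of powers
  have hTt_nn : ∀ (t : ℕ) (x y : S), 0 ≤ (T ^ t) x y := by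
    intro t
    induction t with
    | zero =>
      intro x y
      rw [pow_zero, Matrix.one_apply]
      split <;> norm_num
    | succ t ih =>
      intro x y
      rw [pow_succ, Matrix.mul_apply]
      exact Finset.sum_nonneg fun u _ => mul_nonneg (ih x u) (hnn u y)
  -- row sums of powers
  have hTt_row : ∀ (t : ℕ) (x : S), ∑ y, (T ^ t) x y = 1 := by
    intro t
    induction t with
    | zero => intro x; simp [Matrix.one_apply]
    | succ t ih =>
      intro x
      simp only [pow_succ', Matrix.mul_apply]
      rw [Finset.sum_comm]
      calc ∑ u, ∑ y, T x u * (T ^ t) u y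
          = ∑ u, T x u * ∑ y, (T ^ t) u y := by
            simp [Finset.mul_sum]
        _ = ∑ u, T x u := by simp [ih]
        _ = 1 := hrow x
  -- stationarity for powers
  have hstat_t : ∀ (t : ℕ) (y : S), ∑ x, π x * (T ^ t) x y = π y := by
    intro t
    induction t with
    | zero =>
      intro y
      simp [Matrix.one_apply, mul_ite, mul_one, mul_zero]
    | succ t ih =>
      intro y
      simp only [pow_succ, Matrix.mul_apply, Finset.mul_sum]
      rw [Finset.sum_comm]
      calc ∑ u, ∑ x, π x * ((T ^ t) x u * T u y)
          = ∑ u, (∑ x, π x * (T ^ t) x u) * T u y := by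
            congr 1; funext u; rw [Finset.sum_mul]; congr 1; funext x; ring
        _ = ∑ u, π u * T u y := by simp [ih]
        _ = π y := hstat y
  intro x y
  set M : ℕ → ℝ := fun t => Finset.sup' Finset.univ hne (fun u => (T ^ t) u y) with hM
  set m : ℕ → ℝ := fun t => Finset.inf' Finset.univ hne (fun u => (T ^ t) u y) with hm
  have upper : ∀ (t : ℕ) (u : S), (T ^ t) u y ≤ M t := by
    intro t u
    rw [hM]
    exact Finset.le_sup' (fun u => (T ^ t) u y) (Finset.mem_univ u)
  have lower : ∀ (t : ℕ) (u : S), m t ≤ (T ^ t) u y := by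
    intro t u
    rw [hm]
    exact Finset.inf'_le (fun u => (T ^ t) u y) (Finset.mem_univ u)
  have suple : ∀ (t : ℕ) (B : ℝ), (∀ u, (T ^ t) u y ≤ B) → M t ≤ B := by
    intro t B hB
    rw [hM]
    exact Finset.sup'_le _ _ fun u _ => hB u
  have infge : ∀ (t : ℕ) (B : ℝ), (∀ u, B ≤ (T ^ t) u y) → B ≤ m t := by
    intro t B hB
    rw [hm]
    exact Finset.le_inf' _ _ fun u _ => hB u
  set δ : ℝ := Finset.inf' Finset.univ hne2 (fun p : S × S => (T ^ N) p.1 p.2) with hδ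
  have hδpos : 0 < δ := by
    rw [hδ, Finset.lt_inf'_iff]
    exact fun p _ => hpos p.1 p.2
  have hδle : ∀ u w : S, δ ≤ (T ^ N) u w := by
    intro u w
    rw [hδ]
    exact Finset.inf'_le (fun p : S × S => (T ^ N) p.1 p.2) (Finset.mem_univ (u, w))
  set c : ℝ := 1 - (Fintype.card S : ℝ) * δ with hcdef
  have hcardδ : (Fintype.card S : ℝ) * δ ≤ 1 := by
    have h1 : ∑ w, δ ≤ ∑ w, (T ^ N) x w := Finset.sum_le_sum fun w _ => hδle x w
    rw [hTt_row N x] at h1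
    simpa [Finset.card_univ, mul_comm] using h1
  have hc0 : 0 ≤ c := by rw [hcdef]; linarith
  have hc1 : c < 1 := by
    rw [hcdef]
    have : 0 < (Fintype.card S : ℝ) * δ :=
      mul_pos (by exact_mod_cast Fintype.card_pos) hδpos
    linarith
  -- monotonicity
  have Mmono : ∀ t, M (t + 1) ≤ M t := by
    intro t
    refine suple _ _ ?_
    intro u
    rw [pow_succ', Matrix.mul_apply]
    calc ∑ w, T u w * (T ^ t) w y
        ≤ ∑ w, T u w * M t :=
          Finset.sum_le_sum fun w _ =>
            mul_le_mul_of_nonneg_left (upper t w) (hnn u w)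
      _ = M t := by rw [← Finset.sum_mul, hrow u, one_mul]
  have mmono : ∀ t, m t ≤ m (t + 1) := by
    intro t
    refine infge _ _ ?_
    intro u
    rw [pow_succ', Matrix.mul_apply]
    calc m t = ∑ w, T u w * m t := by rw [← Finset.sum_mul, hrow u, one_mul]
      _ ≤ ∑ w, T u w * (T ^ t) w y :=
          Finset.sum_le_sum fun w _ =>
            mul_le_mul_of_nonneg_left (lower t w) (hnn u w)
  have hManti : Antitone M := antitone_nat_of_succ_le Mmono
  have hmmono : Monotone m := monotone_nat_of_le_succ mmono
  -- π y is squeezed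
  have hπM : ∀ t, π y ≤ M t := by
    intro t
    rw [← hstat_t t y]
    calc ∑ u, π u * (T ^ t) u y
        ≤ ∑ u, π u * M t :=
          Finset.sum_le_sum fun u _ =>
            mul_le_mul_of_nonneg_left (upper t u) (hπnn u)
      _ = M t := by rw [← Finset.sum_mul, hπ1, one_mul]
  have hmπ : ∀ t, m t ≤ π y := by
    intro t
    rw [← hstat_t t y]
    calc m t = ∑ u, π u * m t := by rw [← Finset.sum_mul, hπ1, one_mul]
      _ ≤ ∑ u, π u * (T ^ t) u y :=
          Finset.sum_le_sum fun u _ =>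
            mul_le_mul_of_nonneg_left (lower t u) (hπnn u)
  -- contraction
  have contr : ∀ t, M (N + t) - m (N + t) ≤ c * (M t - m t) := by
    intro t
    have hsplit : ∀ u : S, (T ^ (N + t)) u y
        = ∑ w, ((T ^ N) u w - δ) * (T ^ t) w y + δ * ∑ w, (T ^ t) w y := by
      intro u
      rw [pow_add, Matrix.mul_apply, Finset.mul_sum, ← Finset.sum_add_distrib]
      apply Finset.sum_congr rfl
      intros
      ring
    have hcoef : ∀ u : S, ∑ w, ((T ^ N) u w - δ) = c := by
      intro u
      rw [Finset.sum_sub_distrib, hTt_row N u]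
      simp [hcdef, Finset.card_univ, mul_comm]
    have hMub : M (N + t) ≤ c * M t + δ * ∑ w, (T ^ t) w y := by
      refine suple _ _ ?_
      intro u
      rw [hsplit u]
      have h1 : ∑ w, ((T ^ N) u w - δ) * (T ^ t) w y
          ≤ ∑ w, ((T ^ N) u w - δ) * M t :=
        Finset.sum_le_sum fun w _ =>
          mul_le_mul_of_nonneg_left (upper t w) (by linarith [hδle u w])
      have h2 : ∑ w, ((T ^ N) u w - δ) * M t = c * M t := by
        rw [← Finset.sum_mul, hcoef u]
      linarith
    have hmlb : c * m t + δ * ∑ w, (T ^ t) w y ≤ m (N + t) := by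
      refine infge _ _ ?_
      intro u
      rw [hsplit u]
      have h1 : ∑ w, ((T ^ N) u w - δ) * m t
          ≤ ∑ w, ((T ^ N) u w - δ) * (T ^ t) w y :=
        Finset.sum_le_sum fun w _ =>
          mul_le_mul_of_nonneg_left (lower t w) (by linarith [hδle u w])
      have h2 : ∑ w, ((T ^ N) u w - δ) * m t = c * m t := by
        rw [← Finset.sum_mul, hcoef u]
      linarith
    linarith
  -- gap along multiples of N
  have dkey : ∀ k : ℕ, M (N * k) - m (N * k) ≤ c ^ k * (M 0 - m 0) := by
    intro k
    induction k with
    | zero => simp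
    | succ k ih =>
      have h1 : N * (k + 1) = N + N * k := by ring
      rw [h1, pow_succ]
      calc M (N + N * k) - m (N + N * k) ≤ c * (M (N * k) - m (N * k)) := contr _
        _ ≤ c * (c ^ k * (M 0 - m 0)) := mul_le_mul_of_nonneg_left ih hc0
        _ = c ^ k * c * (M 0 - m 0) := by ring
  -- final bound
  have dmono : ∀ s t : ℕ, s ≤ t → M t - m t ≤ M s - m s := fun s t h =>
    sub_le_sub (hManti h) (hmmono h)
  have final : ∀ t : ℕ, |(T ^ t) x y - π y| ≤ c ^ (t / N) * (M 0 - m 0) := by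
    intro t
    have h1 : N * (t / N) ≤ t := by
      rw [mul_comm]
      exact Nat.div_mul_le_self t N
    have h2 : M t - m t ≤ c ^ (t / N) * (M 0 - m 0) :=
      le_trans (dmono _ _ h1) (dkey _)
    have h3 := upper t x
    have h4 := lower t x
    have h5 := hπM t
    have h6 := hmπ t
    rw [abs_le]
    constructor <;> linarith
  have hb : Filter.Tendsto (fun t : ℕ => c ^ (t / N) * (M 0 - m 0)) Filter.atTop (nhds 0) := by
    have h1 : Filter.Tendsto (fun k : ℕ => c ^ k) Filter.atTop (nhds 0) :=
      tendsto_pow_atTop_nhds_zero_of_lt_one hc0 hc1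
    have h2 : Filter.Tendsto (fun t : ℕ => t / N) Filter.atTop Filter.atTop := by
      apply Filter.tendsto_atTop_atTop.mpr
      intro b
      exact ⟨b * N, fun a ha => (Nat.le_div_iff_mul_le hNpos).mpr ha⟩
    simpa using (h1.comp h2).mul_const (M 0 - m 0)
  rw [tendsto_iff_dist_tendsto_zero]
  simp only [Real.dist_eq]
  exact squeeze_zero (fun t => abs_nonneg _) final hb

/-- Theorem 2, convergence: on a connected non-bipartite finite simple graph,
the Metropolis-coupled chain with transition matrix `T` has the same limiting
distribution as the pair of independent chains: every entry of `T ^ t` in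
column `(v₁, v₂)` converges to `(1/|V|) · (deg v₂ / ∑ deg)`. -/
theorem coupled_chain_limit
    {V : Type*} [Fintype V] [DecidableEq V] [Nonempty V]
    (G : SimpleGraph V) [DecidableRel G.Adj]
    (hconn : G.Connected) (hnb : ¬ G.Colorable 2)
    (hdeg : ∀ u : V, 1 ≤ G.degree u)
    (K : ℝ) (hK : 0 < K) (hdegK : ∀ u : V, (G.degree u : ℝ) ≤ K)
    (P : V → V → ℝ)
    (hP : ∀ u v : V, P u v =
      if G.Adj u v then 1 / K
      else if u = v then 1 - (G.degree u : ℝ) / K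
      else 0)
    (Q : V → V → ℝ)
    (hQ : ∀ u v : V, Q u v = if G.Adj u v then 1 / (G.degree u : ℝ) else 0)
    (κ : V → V → ℝ)
    (hκ : ∀ a b : V, κ a b = min 1 ((G.degree a : ℝ) / (G.degree b : ℝ)))
    (T : Matrix (V × V) (V × V) ℝ)
    (hT : ∀ u₁ u₂ v₁ v₂ : V, T (u₁, u₂) (v₁, v₂) =
      P u₁ v₁ * Q u₂ v₂ * (1 - κ v₁ v₂) + P u₁ v₂ * Q u₂ v₁ * κ v₂ v₁) :
    ∀ (x : V × V) (v₁ v₂ : V),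
      Filter.Tendsto (fun t : ℕ => (T ^ t) x (v₁, v₂)) Filter.atTop
        (nhds ((1 / (Fintype.card V : ℝ)) *
          ((G.degree v₂ : ℝ) / ∑ w : V, (G.degree w : ℝ)))) := by
  classical
  set n : ℝ := (Fintype.card V : ℝ) with hn
  set D : ℝ := ∑ w : V, (G.degree w : ℝ) with hDdef
  have degpos : ∀ u : V, (0 : ℝ) < (G.degree u : ℝ) := by
    intro u
    exact_mod_cast Nat.lt_of_lt_of_le Nat.zero_lt_one (hdeg u)
  have hnpos : 0 < n := by
    rw [hn]
    exact_mod_cast Fintype.card_pos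
  have hDpos : 0 < D := Finset.sum_pos (fun w _ => degpos w) Finset.univ_nonempty
  -- basic entry facts
  have hPnn : ∀ u v : V, 0 ≤ P u v := by
    intro u v
    rw [hP]
    split_ifs with h1 h2
    · positivity
    · have h3 : (G.degree u : ℝ) / K ≤ 1 := (div_le_one hK).mpr (hdegK u)
      linarith
    · exact le_rfl
  have hQnn : ∀ u v : V, 0 ≤ Q u v := by
    intro u v
    rw [hQ]
    split_ifs
    · positivity
    · exact le_rfl
  have hκnn : ∀ a b : V, 0 ≤ κ a b := by
    intro a b
    rw [hκ]
    exact le_min one_pos.le (by positivity)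
  have hκle : ∀ a b : V, κ a b ≤ 1 := by
    intro a b
    rw [hκ]
    exact min_le_left _ _
  have hTnn : ∀ x y : V × V, 0 ≤ T x y := by
    rintro ⟨u₁, u₂⟩ ⟨w₁, w₂⟩
    rw [hT]
    have h1 := hκle w₁ w₂
    have := hPnn u₁ w₁; have := hPnn u₁ w₂
    have := hQnn u₂ w₂; have := hQnn u₂ w₁
    have := hκnn w₂ w₁
    nlinarith [mul_nonneg (mul_nonneg (hPnn u₁ w₁) (hQnn u₂ w₂)) (by linarith : (0:ℝ) ≤ 1 - κ w₁ w₂),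
      mul_nonneg (mul_nonneg (hPnn u₁ w₂) (hQnn u₂ w₁)) (hκnn w₂ w₁)]
  -- adjacency sums
  have hsum_adj : ∀ (a : ℝ) (u : V), ∑ v, (if G.Adj u v then a else 0) = (G.degree u : ℝ) * a := by
    intro a u
    rw [Finset.sum_ite, Finset.sum_const, Finset.sum_const_zero, add_zero,
      ← SimpleGraph.neighborFinset_eq_filter, SimpleGraph.card_neighborFinset_eq_degree,
      nsmul_eq_mul]
  have hProw : ∀ u : V, ∑ v, P u v = 1 := by
    intro u
    have hsplit : ∀ v, P u v = (if G.Adj u v then 1 / K else 0)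
        + (if u = v then 1 - (G.degree u : ℝ) / K else 0) := by
      intro v
      rw [hP]
      by_cases h1 : G.Adj u v
      · have h2 : u ≠ v := G.ne_of_adj h1
        simp [h1, h2]
      · simp [h1]
    rw [Finset.sum_congr rfl fun v _ => hsplit v, Finset.sum_add_distrib, hsum_adj,
      Finset.sum_ite_eq Finset.univ u fun _ => 1 - (G.degree u : ℝ) / K]
    simp only [Finset.mem_univ, if_true]
    field_simp
    ring
  have hPsym : ∀ u v : V, P u v = P v u := by
    intro u v
    by_cases huv : u = v
    · subst huv; rfl
    · rw [hP, hP]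
      by_cases h1 : G.Adj u v
      · simp [h1, h1.symm]
      · have h2 : ¬ G.Adj v u := fun h => h1 h.symm
        simp [h1, h2, huv, Ne.symm huv]
  have hPcol : ∀ v : V, ∑ u, P u v = 1 := by
    intro v
    rw [Finset.sum_congr rfl fun u _ => hPsym u v]
    exact hProw v
  have hQrow : ∀ u : V, ∑ v, Q u v = 1 := by
    intro u
    rw [Finset.sum_congr rfl fun v _ => hQ u v, hsum_adj]
    field_simp
    exact div_self (ne_of_gt (degpos u))
  have hνQ : ∀ v : V, ∑ u, (G.degree u : ℝ) / D * Q u v = (G.degree v : ℝ) / D := by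
    intro v
    have hpt : ∀ u : V, (G.degree u : ℝ) / D * Q u v = (if G.Adj v u then 1 / D else 0) := by
      intro u
      rw [hQ]
      by_cases h1 : G.Adj u v
      · rw [if_pos h1, if_pos h1.symm]
        field_simp
        exact div_self (ne_of_gt (degpos u))
      · rw [if_neg h1, if_neg (fun h => h1 (G.adj_symm h))]
        ring
    rw [Finset.sum_congr rfl fun u _ => hpt u, hsum_adj]
    ring
  -- row sums of T
  have hTrow : ∀ x : V × V, ∑ y : V × V, T x y = 1 := by
    rintro ⟨u₁, u₂⟩
    rw [Fintype.sum_prod_type]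
    have hswap : ∑ v₁ : V, ∑ v₂ : V, P u₁ v₂ * Q u₂ v₁ * κ v₂ v₁
        = ∑ v₁ : V, ∑ v₂ : V, P u₁ v₁ * Q u₂ v₂ * κ v₁ v₂ := Finset.sum_comm
    calc ∑ v₁ : V, ∑ v₂ : V, T (u₁, u₂) (v₁, v₂)
        = ∑ v₁ : V, ∑ v₂ : V,
            (P u₁ v₁ * Q u₂ v₂ * (1 - κ v₁ v₂) + P u₁ v₂ * Q u₂ v₁ * κ v₂ v₁) := by
          exact Finset.sum_congr rfl fun v₁ _ => Finset.sum_congr rfl fun v₂ _ => hT u₁ u₂ v₁ v₂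
      _ = (∑ v₁ : V, ∑ v₂ : V, P u₁ v₁ * Q u₂ v₂ * (1 - κ v₁ v₂))
            + ∑ v₁ : V, ∑ v₂ : V, P u₁ v₂ * Q u₂ v₁ * κ v₂ v₁ := by
          simp [Finset.sum_add_distrib]
      _ = ∑ v₁ : V, ∑ v₂ : V, P u₁ v₁ * Q u₂ v₂ := by
          rw [hswap, ← Finset.sum_add_distrib]
          refine Finset.sum_congr rfl fun v₁ _ => ?_
          rw [← Finset.sum_add_distrib]
          refine Finset.sum_congr rfl fun v₂ _ => ?_
          ring
      _ = ∑ v₁ : V, P u₁ v₁ * ∑ v₂ : V, Q u₂ v₂ := by simp [Finset.mul_sum]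
      _ = 1 := by simp [hQrow, hProw]
  -- stationary distribution
  set π : V × V → ℝ := fun p => 1 / n * ((G.degree p.2 : ℝ) / D) with hπdef
  have hπnn : ∀ p : V × V, 0 ≤ π p := by
    intro p
    simp only [hπdef]
    exact mul_nonneg (one_div_nonneg.mpr hnpos.le) (div_nonneg (degpos p.2).le hDpos.le)
  have hπ1 : ∑ p : V × V, π p = 1 := by
    have h2 : ∑ v₂ : V, (G.degree v₂ : ℝ) / D = 1 := by
      rw [← Finset.sum_div, ← hDdef, div_self (ne_of_gt hDpos)]
    simp only [hπdef]
    rw [Fintype.sum_prod_type]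
    have h3 : ∀ v₁ : V, ∑ v₂ : V, 1 / n * ((G.degree v₂ : ℝ) / D) = 1 / n := by
      intro v₁
      rw [← Finset.mul_sum, h2, mul_one]
    rw [Finset.sum_congr rfl fun v₁ _ => h3 v₁, Finset.sum_const, Finset.card_univ,
      nsmul_eq_mul, ← hn]
    field_simp
  have fact : ∀ (C : ℝ) (f g : V → ℝ),
      ∑ u₁ : V, ∑ u₂ : V, C * (f u₁ * g u₂) = C * ((∑ u₁ : V, f u₁) * (∑ u₂ : V, g u₂)) := by
    intro C f g
    simp only [← Finset.mul_sum, ← Finset.sum_mul]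
  have hbal : ∀ v₁ v₂ : V, κ v₂ v₁ * (G.degree v₁ : ℝ) = κ v₁ v₂ * (G.degree v₂ : ℝ) := by
    intro v₁ v₂
    rw [hκ, hκ, min_mul_of_nonneg _ _ (degpos v₁).le, min_mul_of_nonneg _ _ (degpos v₂).le,
      one_mul, one_mul, div_mul_cancel₀ _ (ne_of_gt (degpos v₁)),
      div_mul_cancel₀ _ (ne_of_gt (degpos v₂)), min_comm]
  have hstat : ∀ y : V × V, ∑ x : V × V, π x * T x y = π y := by
    rintro ⟨v₁, v₂⟩
    rw [Fintype.sum_prod_type]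
    have hpt : ∀ u₁ u₂ : V, π (u₁, u₂) * T (u₁, u₂) (v₁, v₂)
        = (1 - κ v₁ v₂) * ((1 / n * P u₁ v₁) * ((G.degree u₂ : ℝ) / D * Q u₂ v₂))
          + κ v₂ v₁ * ((1 / n * P u₁ v₂) * ((G.degree u₂ : ℝ) / D * Q u₂ v₁)) := by
      intro u₁ u₂
      rw [hT]
      simp only [hπdef]
      ring
    calc ∑ u₁ : V, ∑ u₂ : V, π (u₁, u₂) * T (u₁, u₂) (v₁, v₂)
        = (∑ u₁ : V, ∑ u₂ : V,
            (1 - κ v₁ v₂) * ((1 / n * P u₁ v₁) * ((G.degree u₂ : ℝ) / D * Q u₂ v₂)))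
          + ∑ u₁ : V, ∑ u₂ : V,
            κ v₂ v₁ * ((1 / n * P u₁ v₂) * ((G.degree u₂ : ℝ) / D * Q u₂ v₁)) := by
          rw [Finset.sum_congr rfl fun u₁ _ => Finset.sum_congr rfl fun u₂ _ => hpt u₁ u₂]
          simp [Finset.sum_add_distrib]
      _ = (1 - κ v₁ v₂) *
            ((∑ u₁ : V, 1 / n * P u₁ v₁) * (∑ u₂ : V, (G.degree u₂ : ℝ) / D * Q u₂ v₂))
          + κ v₂ v₁ *
            ((∑ u₁ : V, 1 / n * P u₁ v₂) * (∑ u₂ : V, (G.degree u₂ : ℝ) / D * Q u₂ v₁)) := by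
          rw [fact, fact]
      _ = (1 - κ v₁ v₂) * (1 / n * ((G.degree v₂ : ℝ) / D))
          + κ v₂ v₁ * (1 / n * ((G.degree v₁ : ℝ) / D)) := by
          rw [← Finset.mul_sum, ← Finset.mul_sum, hPcol, hPcol, hνQ, hνQ]
          ring
      _ = π (v₁, v₂) := by
          simp only [hπdef]
          linear_combination (1 / n) * (1 / D) * hbal v₁ v₂
  -- nonnegativity of powers
  have hTt_nn : ∀ (t : ℕ) (x y : V × V), 0 ≤ (T ^ t) x y := by
    intro t
    induction t with
    | zero =>
      intro x y
      rw [pow_zero, Matrix.one_apply]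
      split <;> norm_num
    | succ t ih =>
      intro x y
      rw [pow_succ, Matrix.mul_apply]
      exact Finset.sum_nonneg fun u _ => mul_nonneg (ih x u) (hTnn u y)
  have step_pos : ∀ u₁ u₂ w₁ w₂ : V, G.Adj u₂ w₁ → G.Adj u₁ w₂ →
      0 < T (u₁, u₂) (w₁, w₂) := by
    intro u₁ u₂ w₁ w₂ h21 h12
    rw [hT]
    have hterm1 : 0 ≤ P u₁ w₁ * Q u₂ w₂ * (1 - κ w₁ w₂) :=
      mul_nonneg (mul_nonneg (hPnn _ _) (hQnn _ _)) (by linarith [hκle w₁ w₂])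
    have hP2 : 0 < P u₁ w₂ := by rw [hP, if_pos h12]; positivity
    have hQ2 : 0 < Q u₂ w₁ := by rw [hQ, if_pos h21]; exact one_div_pos.mpr (degpos u₂)
    have hκ2 : 0 < κ w₂ w₁ := by
      rw [hκ]
      exact lt_min one_pos (div_pos (degpos w₂) (degpos w₁))
    have : 0 < P u₁ w₂ * Q u₂ w₁ * κ w₂ w₁ := mul_pos (mul_pos hP2 hQ2) hκ2
    linarith
  have prod_lb : ∀ (s : ℕ) (a b z : V × V),
      0 < T a b → 0 < (T ^ s) b z → 0 < (T ^ (s + 1)) a z := by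
    intro s a b z h1 h2
    rw [pow_succ', Matrix.mul_apply]
    apply Finset.sum_pos'
    · exact fun u _ => mul_nonneg (hTnn a u) (hTt_nn s u z)
    · exact ⟨b, Finset.mem_univ b, mul_pos h1 h2⟩
  have chain : ∀ (m : ℕ) (u₁ u₂ w₁ w₂ : V) (p : G.Walk u₁ w₁) (q : G.Walk u₂ w₂),
      p.length = 2 * m → q.length = 2 * m → 0 < (T ^ (2 * m)) (u₁, u₂) (w₁, w₂) := by
    intro m
    induction m with
    | zero =>
      intro u₁ u₂ w₁ w₂ p q hp hq
      have h1 : u₁ = w₁ := SimpleGraph.Walk.eq_of_length_eq_zero (p := p) (by omega)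
      have h2 : u₂ = w₂ := SimpleGraph.Walk.eq_of_length_eq_zero (p := q) (by omega)
      subst h1; subst h2
      simp [Matrix.one_apply]
    | succ m ih =>
      intro u₁ u₂ w₁ w₂ p q hp hq
      cases p with
      | nil => simp at hp
      | cons h p' =>
        cases p' with
        | nil => simp at hp; omega
        | cons h' p'' =>
          cases q with
          | nil => simp at hq
          | cons k q' =>
            cases q' with
            | nil => simp at hq; omega
            | cons k' q'' =>
              have hp'' : p''.length = 2 * m := by
                simp [SimpleGraph.Walk.length_cons] at hp; omega
              have hq'' : q''.length = 2 * m := by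
                simp [SimpleGraph.Walk.length_cons] at hq; omega
              have h0 := ih _ _ _ _ p'' q'' hp'' hq''
              have s1 := step_pos _ _ _ _ k h
              have s2 := step_pos _ _ _ _ h' k'
              have c1 := prod_lb (2 * m) _ _ _ s2 h0
              have c2 := prod_lb (2 * m + 1) _ _ _ s1 c1
              have he : 2 * (m + 1) = 2 * m + 1 + 1 := by ring
              rw [he]
              exact c2
  obtain ⟨N, hNpos, hNeven, hNwalk⟩ := aux_uniform_walk G hconn hnb hdeg
  obtain ⟨mm, hmm⟩ := hNeven
  have hTNpos : ∀ x y : V × V, 0 < (T ^ N) x y := by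
    rintro ⟨u₁, u₂⟩ ⟨w₁, w₂⟩
    obtain ⟨p, hp⟩ := hNwalk u₁ w₁
    obtain ⟨q, hq⟩ := hNwalk u₂ w₂
    have h2 : N = 2 * mm := by omega
    rw [h2] at hp hq ⊢
    exact chain mm _ _ _ _ p q hp hq
  have main := markov_conv T hTnn hTrow π hπ1 hπnn hstat N hNpos hTNpos
  intro x v₁ v₂
  simpa only [hπdef] using main x (v₁, v₂)
end

section
/- Let (X, ≤) be a finite partially ordered set with n elements and let x ∈ X. Call a bijection σ : X → {1, …, n} a linear extension if a < b implies σ(a) < σ(b) for all a, b ∈ X. Then the set of positions of x over all linear extensions, {σ(x) : σ a linear extension}, is exactly the integer interval {r : #{y ∈ X : y < x} + 1 ≤ r ≤ n − #{y ∈ X : x < y}}. -/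
open Finset

private def blk {X : Type*} [DecidableEq X] (S : Finset X) (x : X) (a : X) : Fin 3 :=
  if a ∈ S then 0 else if a = x then 1 else 2

private lemma exists_ext {X : Type*} [Fintype X] [PartialOrder X] {n : ℕ}
    (hn : Fintype.card X = n) (x : X) (S : Finset X)
    (hlow : ∀ a b : X, a < b → b ∈ S → a ∈ S) (hD : ∀ a : X, a < x → a ∈ S)
    (hx : x ∉ S) (hU : ∀ a : X, x < a → a ∉ S) :
    ∃ σ : X ≃ Fin n, (∀ a b : X, a < b → σ a < σ b) ∧ (σ x : ℕ) = S.card := by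
  classical
  set g : X → Lex (Fin 3 × LinearExtension X) :=
    fun a => toLex (blk S x a, toLinearExtension a) with hg
  have hginj : Function.Injective g := by
    intro a b h
    exact congrArg (fun p => (ofLex p).2) h
  have hblkx : blk S x x = 1 := by simp [blk, hx]
  have hblk_le : ∀ a b : X, a < b → blk S x a ≤ blk S x b := by
    intro a b hab
    by_cases hbS : b ∈ S
    · rw [blk, if_pos (hlow a b hab hbS), blk, if_pos hbS]
    · by_cases hbx : b = x
      · subst hbx
        rw [blk, if_pos (hD a hab), hblkx]
        decide
      · have h2 : blk S x b = 2 := by rw [blk, if_neg hbS, if_neg hbx]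
        rw [h2]
        exact Fin.le_last (blk S x a)
  have hkey : ∀ a b : X, a < b → g a < g b := by
    intro a b hab
    rw [hg]
    rw [Prod.Lex.lt_iff]
    dsimp only
    rcases lt_or_eq_of_le (hblk_le a b hab) with h | h
    · exact Or.inl h
    · refine Or.inr ⟨h, ?_⟩
      refine lt_of_le_of_ne (toLinearExtension.monotone hab.le) ?_
      intro hcon
      exact absurd (show a = b from hcon) hab.ne
  have hchar : ∀ y : X, g y < g x ↔ y ∈ S := by
    intro y
    constructor
    · intro h
      by_contra hyS
      by_cases hyx : y = x
      · subst hyx; exact absurd h (lt_irrefl _)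
      · have h2 : blk S x y = 2 := by rw [blk, if_neg hyS, if_neg hyx]
        rw [hg, Prod.Lex.lt_iff] at h
        dsimp only at h
        rw [h2, hblkx] at h
        rcases h with h | ⟨h, _⟩
        · exact absurd h (by decide : ¬ ((2 : Fin 3) < 1))
        · exact absurd h (by decide : ¬ ((2 : Fin 3) = 1))
    · intro hyS
      have h0 : blk S x y = 0 := by rw [blk, if_pos hyS]
      rw [hg, Prod.Lex.lt_iff]
      dsimp only
      left
      rw [h0, hblkx]
      exact (by decide : (0 : Fin 3) < 1)
  set T : Finset (Lex (Fin 3 × LinearExtension X)) := Finset.univ.image g with hT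
  have hmemT : ∀ a : X, g a ∈ T := by
    intro a; rw [hT]; exact Finset.mem_image_of_mem g (Finset.mem_univ a)
  have hTcard : T.card = n := by
    rw [hT, Finset.card_image_of_injective _ hginj, Finset.card_univ, hn]
  let e := T.orderIsoOfFin hTcard
  let f : X → Fin n := fun a => e.symm ⟨g a, hmemT a⟩
  have hfinj : Function.Injective f := by
    intro a b h
    have := e.symm.injective h
    exact hginj (congrArg Subtype.val this)
  have hfbij : Function.Bijective f := by
    rw [Fintype.bijective_iff_injective_and_card]
    exact ⟨hfinj, by rw [hn, Fintype.card_fin]⟩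
  have hflt : ∀ a b : X, g a < g b → f a < f b := by
    intro a b h
    have : (⟨g a, hmemT a⟩ : {z // z ∈ T}) < ⟨g b, hmemT b⟩ := Subtype.mk_lt_mk.mpr h
    exact e.symm.lt_iff_lt.mpr this
  refine ⟨Equiv.ofBijective f hfbij, ?_, ?_⟩
  · intro a b hab
    exact hflt a b (hkey a b hab)
  · have himg : Finset.Iio (f x) = S.image f := by
      ext j
      simp only [Finset.mem_Iio, Finset.mem_image]
      constructor
      · intro hj
        obtain ⟨y, -, hy⟩ : ∃ y ∈ Finset.univ, g y = (e j : Lex (Fin 3 × LinearExtension X)) :=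
          Finset.mem_image.mp (show ((e j : {z // z ∈ T}) : Lex (Fin 3 × LinearExtension X))
            ∈ Finset.univ.image g from (e j).2)
        have hey : (⟨g y, hmemT y⟩ : {z // z ∈ T}) = e j := Subtype.ext hy
        have hyj : f y = j := by
          show e.symm ⟨g y, hmemT y⟩ = j
          rw [hey, OrderIso.symm_apply_apply]
        refine ⟨y, ?_, hyj⟩
        apply (hchar y).mp
        have h1 : e j < (⟨g x, hmemT x⟩ : {z // z ∈ T}) := by
          have h2 := e.strictMono hj
          exact lt_of_lt_of_eq h2 (e.apply_symm_apply _)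
        have h3 : (⟨g y, hmemT y⟩ : {z // z ∈ T}) < ⟨g x, hmemT x⟩ := by
          rw [hey]; exact h1
        exact Subtype.mk_lt_mk.mp h3
      · rintro ⟨y, hy, rfl⟩
        exact hflt y x ((hchar y).mpr hy)
    have hcard := congrArg Finset.card himg
    rw [Fin.card_Iio, Finset.card_image_of_injective S hfinj] at hcard
    exact hcard

private lemma exists_lowerset {X : Type*} [Fintype X] [PartialOrder X] (x : X) :
    ∀ k : ℕ, Nat.card {y : X // y < x} + k + Nat.card {y : X // x < y} + 1 ≤ Fintype.card X →
    ∃ S : Finset X, (∀ a b : X, a < b → b ∈ S → a ∈ S) ∧ (∀ a : X, a < x → a ∈ S) ∧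
      x ∉ S ∧ (∀ a : X, x < a → a ∉ S) ∧ S.card = Nat.card {y : X // y < x} + k := by
  classical
  have hd : Nat.card {y : X // y < x} = (Finset.univ.filter (fun y => y < x)).card := by
    rw [Nat.card_eq_fintype_card, Fintype.card_subtype]
  have hu : Nat.card {y : X // x < y} = (Finset.univ.filter (fun y => x < y)).card := by
    rw [Nat.card_eq_fintype_card, Fintype.card_subtype]
  intro k
  induction k with
  | zero =>
    intro _
    refine ⟨Finset.univ.filter (fun y => y < x), ?_, ?_, ?_, ?_, ?_⟩
    · intro a b hab hb
      simp only [Finset.mem_filter, Finset.mem_univ, true_and] at hb ⊢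
      exact hab.trans hb
    · intro a ha; simp only [Finset.mem_filter, Finset.mem_univ, true_and]; exact ha
    · simp only [Finset.mem_filter, Finset.mem_univ, true_and]; exact lt_irrefl x
    · intro a ha
      simp only [Finset.mem_filter, Finset.mem_univ, true_and]
      intro h
      exact absurd (ha.trans h) (lt_irrefl x)
    · rw [hd]; omega
  | succ k ih =>
    intro hle
    obtain ⟨S, hlow, hDS, hxS, hUS, hcard⟩ := ih (by omega)
    set U := Finset.univ.filter (fun y => x < y) with hUdef
    set C := Finset.univ \ (insert x S ∪ U) with hC
    have hCcard : C.card = Fintype.card X - (insert x S ∪ U).card := by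
      rw [hC, Finset.card_sdiff_of_subset (Finset.subset_univ _), Finset.card_univ]
    have hbound : (insert x S ∪ U).card ≤ S.card + 1 + U.card := by
      refine le_trans (Finset.card_union_le _ _) ?_
      have := Finset.card_insert_le x S
      omega
    have hUc : U.card = Nat.card {y : X // x < y} := by rw [hu, hUdef]
    have hCpos : 0 < C.card := by omega
    obtain ⟨m, hmC, hmin⟩ : ∃ m ∈ C, ∀ a ∈ C, ¬ a < m := by
      obtain ⟨m, hm⟩ := Finset.exists_minimal (Finset.card_pos.mp hCpos)
      exact ⟨m, hm.1, fun (a : X) ha (hlt : a < m) => lt_irrefl a (lt_of_lt_of_le hlt (hm.2 ha (le_of_lt hlt)))⟩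
    have hmC' : m ≠ x ∧ m ∉ S ∧ ¬ x < m := by
      rw [hC] at hmC
      simp only [Finset.mem_sdiff, Finset.mem_univ, true_and, Finset.mem_union,
        Finset.mem_insert, hUdef, Finset.mem_filter, not_or] at hmC
      tauto
    obtain ⟨hmx, hmS, hmU⟩ := hmC'
    refine ⟨insert m S, ?_, ?_, ?_, ?_, ?_⟩
    · intro a b hab hb
      rcases Finset.mem_insert.mp hb with rfl | hbS
      · by_cases haS : a ∈ S
        · exact Finset.mem_insert_of_mem haS
        · exfalso
          have haC : a ∈ C := by
            rw [hC]
            simp only [Finset.mem_sdiff, Finset.mem_univ, true_and, Finset.mem_union,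
              Finset.mem_insert, hUdef, Finset.mem_filter, not_or]
            refine ⟨⟨?_, haS⟩, ?_⟩
            · rintro rfl; exact hmU hab
            · exact fun h => hmU (h.trans hab)
          exact hmin a haC hab
      · exact Finset.mem_insert_of_mem (hlow a b hab hbS)
    · intro a ha; exact Finset.mem_insert_of_mem (hDS a ha)
    · intro h
      rcases Finset.mem_insert.mp h with rfl | h
      · exact hmx rfl
      · exact hxS h
    · intro a ha h
      rcases Finset.mem_insert.mp h with rfl | h
      · exact hmU ha
      · exact hUS a ha h
    · rw [Finset.card_insert_of_notMem hmS, hcard]; omega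

/-- In a finite poset with `n` elements, the set of positions of a fixed
element `x` over all linear extensions is exactly the integer interval from
`#{y : y < x} + 1` to `n - #{y : x < y}`. -/
theorem linear_extension_positions
    {X : Type*} [Fintype X] [PartialOrder X]
    (n : ℕ) (hn : Fintype.card X = n) (x : X) :
    ∀ r : ℕ,
      (∃ σ : X ≃ Fin n, (∀ a b : X, a < b → σ a < σ b) ∧ r = (σ x : ℕ) + 1) ↔
      (Nat.card {y : X // y < x} + 1 ≤ r ∧
       r ≤ n - Nat.card {y : X // x < y}) := by
  classical
  have hd : Nat.card {y : X // y < x} = (Finset.univ.filter (fun y => y < x)).card := by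
    rw [Nat.card_eq_fintype_card, Fintype.card_subtype]
  have hu : Nat.card {y : X // x < y} = (Finset.univ.filter (fun y => x < y)).card := by
    rw [Nat.card_eq_fintype_card, Fintype.card_subtype]
  intro r
  constructor
  · rintro ⟨σ, hmono, rfl⟩
    have hlt : ((σ x : ℕ)) < n := (σ x).isLt
    have h1 : (Finset.univ.filter (fun y => y < x)).card ≤ (σ x : ℕ) := by
      have hsub : (Finset.univ.filter (fun y => y < x)).image σ ⊆ Finset.Iio (σ x) := by
        intro j hj
        simp only [Finset.mem_image, Finset.mem_filter, Finset.mem_univ, true_and] at hj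
        obtain ⟨y, hy, rfl⟩ := hj
        exact Finset.mem_Iio.mpr (hmono y x hy)
      calc (Finset.univ.filter (fun y => y < x)).card
          = ((Finset.univ.filter (fun y => y < x)).image σ).card :=
            (Finset.card_image_of_injective _ σ.injective).symm
        _ ≤ (Finset.Iio (σ x)).card := Finset.card_le_card hsub
        _ = (σ x : ℕ) := Fin.card_Iio _
    have h2 : (Finset.univ.filter (fun y => x < y)).card ≤ n - 1 - (σ x : ℕ) := by
      have hsub : (Finset.univ.filter (fun y => x < y)).image σ ⊆ Finset.Ioi (σ x) := by
        intro j hj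
        simp only [Finset.mem_image, Finset.mem_filter, Finset.mem_univ, true_and] at hj
        obtain ⟨y, hy, rfl⟩ := hj
        exact Finset.mem_Ioi.mpr (hmono x y hy)
      calc (Finset.univ.filter (fun y => x < y)).card
          = ((Finset.univ.filter (fun y => x < y)).image σ).card :=
            (Finset.card_image_of_injective _ σ.injective).symm
        _ ≤ (Finset.Ioi (σ x)).card := Finset.card_le_card hsub
        _ = n - 1 - (σ x : ℕ) := Fin.card_Ioi _
    rw [hd, hu]
    omega
  · rintro ⟨h1, h2⟩
    have huN : Nat.card {y : X // x < y} ≤ n := by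
      rw [hu, ← hn]
      exact le_trans (Finset.card_le_card (Finset.filter_subset _ _)) Finset.card_univ.le
    have hk : Nat.card {y : X // y < x} + (r - 1 - Nat.card {y : X // y < x}) +
        Nat.card {y : X // x < y} + 1 ≤ Fintype.card X := by
      rw [hn]; omega
    obtain ⟨S, hlow, hDS, hxS, hUS, hcard⟩ :=
      exists_lowerset x (r - 1 - Nat.card {y : X // y < x}) hk
    obtain ⟨σ, hmono, hpos⟩ := exists_ext hn x S hlow hDS hxS hUS
    exact ⟨σ, hmono, by omega⟩
end

section
/- (Proposition 1, uncensored case.) Fix n ≥ 1, observed values x : {1,…,n} → ℝ, and a set C ⊆ {1,…,n} of right-censored indices with complement U (uncensored indices). Call a bijection σ : {1,…,n} → {1,…,n} an admissible rank vector if: (i) for all i, j ∈ U, x_i < x_j implies σ(i) < σ(j); and (ii) for all i ∈ U and j ∈ C, x_i ≤ x_j implies σ(i) < σ(j). Then for every uncensored index i ∈ U, the set of possible ranks {σ(i) : σ admissible} equals the integer interval {r : #{j ∈ U : x_j < x_i} + 1 ≤ r ≤ #{j ∈ U : x_j ≤ x_i} + #{j ∈ C : x_j < x_i}}. -/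
open Finset

lemma rank_perm {n : ℕ} {α : Type*} [LinearOrder α] (κ : Fin n → α)
    (hκ : Function.Injective κ) :
    ∃ σ : Equiv.Perm (Fin n), (∀ j k, σ j < σ k ↔ κ j < κ k) ∧
      ∀ j, (σ j : ℕ) = (univ.filter fun k => κ k < κ j).card := by
  classical
  set τ := Tuple.sort κ with hτ
  have hmono : StrictMono (κ ∘ τ) :=
    (Tuple.monotone_sort κ).strictMono_of_injective (hκ.comp τ.injective)
  refine ⟨τ⁻¹, ?_, ?_⟩
  · intro j k
    have hj : κ j = (κ ∘ τ) (τ⁻¹ j) := by simp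
    have hk : κ k = (κ ∘ τ) (τ⁻¹ k) := by simp
    rw [hj, hk, hmono.lt_iff_lt]
  · intro j
    have h1 : (univ.filter fun k => κ k < κ j) =
        (univ.filter fun k => τ⁻¹ k < τ⁻¹ j) := by
      ext k
      have hj : κ j = (κ ∘ τ) (τ⁻¹ j) := by simp
      have hk : κ k = (κ ∘ τ) (τ⁻¹ k) := by simp
      simp only [mem_filter, mem_univ, true_and]
      rw [hk, hj, hmono.lt_iff_lt]
    have h2 : (univ.filter fun k => τ⁻¹ k < τ⁻¹ j) =
        (Finset.Iio (τ⁻¹ j)).image τ := by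
      ext k
      simp only [mem_filter, mem_univ, true_and, mem_image, Finset.mem_Iio]
      constructor
      · intro h; exact ⟨τ⁻¹ k, h, by simp⟩
      · rintro ⟨m, hm, rfl⟩; simpa using hm
    rw [h1, h2, Finset.card_image_of_injective _ τ.injective, Fin.card_Iio]

/-- Proposition 1, uncensored case: for right-censored univariate data with
censored index set `C`, the set of possible ranks of an uncensored observation
`i` over all admissible rank vectors is the integer interval from
`#{j ∉ C : x j < x i} + 1` to `#{j ∉ C : x j ≤ x i} + #{j ∈ C : x j < x i}`. -/
theorem right_censored_ranks_uncensored
    (n : ℕ) (hn : 1 ≤ n) (x : Fin n → ℝ) (C : Finset (Fin n))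
    (i : Fin n) (hi : i ∉ C) :
    ∀ r : ℕ,
      (∃ σ : Equiv.Perm (Fin n),
        ((∀ a b : Fin n, a ∉ C → b ∉ C → x a < x b → σ a < σ b) ∧
         (∀ a b : Fin n, a ∉ C → b ∈ C → x a ≤ x b → σ a < σ b)) ∧
        r = (σ i : ℕ) + 1) ↔
      (Nat.card {j : Fin n // j ∉ C ∧ x j < x i} + 1 ≤ r ∧
       r ≤ Nat.card {j : Fin n // j ∉ C ∧ x j ≤ x i} +
             Nat.card {j : Fin n // j ∈ C ∧ x j < x i}) := by
  classical
  intro r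
  -- Finset versions of the counts
  set Lset : Finset (Fin n) := univ.filter (fun j => j ∉ C ∧ x j < x i) with hLset
  set Aset : Finset (Fin n) := univ.filter (fun j => j ∉ C ∧ x j ≤ x i) with hAset
  set Bset : Finset (Fin n) := univ.filter (fun j => j ∈ C ∧ x j < x i) with hBset
  have hcardL : Nat.card {j : Fin n // j ∉ C ∧ x j < x i} = Lset.card := by
    rw [Nat.card_eq_fintype_card, Fintype.card_subtype]
  have hcardA : Nat.card {j : Fin n // j ∉ C ∧ x j ≤ x i} = Aset.card := by
    rw [Nat.card_eq_fintype_card, Fintype.card_subtype]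
  have hcardB : Nat.card {j : Fin n // j ∈ C ∧ x j < x i} = Bset.card := by
    rw [Nat.card_eq_fintype_card, Fintype.card_subtype]
  rw [hcardL, hcardA, hcardB]
  constructor
  · -- forward: any admissible σ has rank in the interval
    rintro ⟨σ, ⟨h1, h2⟩, rfl⟩
    constructor
    · -- lower bound
      have hsub : ∀ j ∈ Lset, σ j ∈ Finset.Iio (σ i) := by
        intro j hj
        rw [hLset, mem_filter] at hj
        exact Finset.mem_Iio.2 (h1 j i hj.2.1 hi hj.2.2)
      have := Finset.card_le_card_of_injOn σ hsub (σ.injective.injOn)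
      rw [Fin.card_Iio] at this
      omega
    · -- upper bound
      have key : (univ.filter fun j => σ j ≤ σ i) ⊆ Aset ∪ Bset := by
        intro j hj
        rw [mem_filter] at hj
        rw [mem_union, hAset, hBset, mem_filter, mem_filter]
        by_cases hjC : j ∈ C
        · refine Or.inr ⟨mem_univ j, hjC, ?_⟩
          by_contra hlt
          exact absurd (h2 i j hi hjC (not_lt.1 hlt)) (not_lt.2 hj.2)
        · refine Or.inl ⟨mem_univ j, hjC, ?_⟩
          by_contra hlt
          exact absurd (h1 i j hi hjC (not_le.1 hlt)) (not_lt.2 hj.2)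
      have hcard : (univ.filter fun j => σ j ≤ σ i).card = (σ i : ℕ) + 1 := by
        have h2' : (univ.filter fun j => σ j ≤ σ i) =
            (Finset.Iic (σ i)).image σ.symm := by
          ext k
          simp only [mem_filter, mem_univ, true_and, mem_image, Finset.mem_Iic]
          constructor
          · intro h; exact ⟨σ k, h, by simp⟩
          · rintro ⟨m, hm, rfl⟩; simpa using hm
        rw [h2', Finset.card_image_of_injective _ σ.symm.injective, Fin.card_Iic]
      calc (σ i : ℕ) + 1 = (univ.filter fun j => σ j ≤ σ i).card := hcard.symm
        _ ≤ (Aset ∪ Bset).card := Finset.card_le_card key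
        _ ≤ Aset.card + Bset.card := Finset.card_union_le _ _
  · -- reverse: construct an admissible σ with given rank
    rintro ⟨hr1, hr2⟩
    set E : Finset (Fin n) := univ.filter (fun j => j ∉ C ∧ x j = x i) with hE
    have hiE : i ∈ E := by rw [hE, mem_filter]; exact ⟨mem_univ i, hi, rfl⟩
    have hEpos : 1 ≤ E.card := Finset.card_pos.2 ⟨i, hiE⟩
    set D : Finset (Fin n) := (E.erase i) ∪ Bset with hD
    have hdisj : Disjoint (E.erase i) Bset := by
      rw [Finset.disjoint_left]
      intro j hj hjB
      rw [Finset.mem_erase, hE, mem_filter] at hj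
      rw [hBset, mem_filter] at hjB
      exact hj.2.2.1 hjB.2.1
    have hDcard : D.card = (E.card - 1) + Bset.card := by
      rw [hD, Finset.card_union_of_disjoint hdisj, Finset.card_erase_of_mem hiE]
    have hAsplit : Aset.card = Lset.card + E.card := by
      have hsplit : Aset = Lset ∪ E := by
        ext j
        rw [hAset, hLset, hE, mem_union, mem_filter, mem_filter, mem_filter]
        constructor
        · rintro ⟨hu, hjC, hle⟩
          rcases lt_or_eq_of_le hle with h | h
          · exact Or.inl ⟨hu, hjC, h⟩
          · exact Or.inr ⟨hu, hjC, h⟩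
        · rintro (⟨hu, hjC, h⟩ | ⟨hu, hjC, h⟩)
          · exact ⟨hu, hjC, le_of_lt h⟩
          · exact ⟨hu, hjC, le_of_eq h⟩
      have hdisj2 : Disjoint Lset E := by
        rw [Finset.disjoint_left]
        intro j hj hjE
        rw [hLset, mem_filter] at hj
        rw [hE, mem_filter] at hjE
        exact absurd hjE.2.2 (ne_of_lt hj.2.2)
      rw [hsplit, Finset.card_union_of_disjoint hdisj2]
    set m : ℕ := r - (Lset.card + 1) with hm
    have hmD : m ≤ D.card := by
      rw [hDcard]; omega
    obtain ⟨S, hSD, hScard⟩ := Finset.exists_subset_card_eq hmD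
    have hiD : i ∉ D := by
      rw [hD, mem_union]
      rintro (h | h)
      · exact (Finset.mem_erase.1 h).1 rfl
      · exact hi ((mem_filter.1 h).2.1)
    have hiS : i ∉ S := fun h => hiD (hSD h)
    -- membership characterization of S elements
    have hSmem : ∀ k ∈ S, (k ∉ C ∧ x k = x i) ∨ (k ∈ C ∧ x k < x i) := by
      intro k hk
      have := hSD hk
      rw [hD, mem_union, Finset.mem_erase, hE, mem_filter, hBset, mem_filter] at this
      rcases this with ⟨_, _, h⟩ | ⟨_, h⟩
      · exact Or.inl h
      · exact Or.inr h
    -- define the key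
    set P : Fin n → Prop := fun j => (j ∉ C ∧ x j = x i) ∨ (j ∈ C ∧ x j < x i) with hP
    set a : Fin n → ℝ := fun j => if P j then x i else x j with ha
    set b : Fin n → ℕ := fun j =>
      if j ∈ S then 0 else if j = i then 1 else if j ∈ C ∧ x i ≤ x j then 3 else 2 with hb
    have ha_unc : ∀ j ∉ C, a j = x j := by
      intro j hj
      rw [ha]; simp only
      split_ifs with h
      · rcases h with ⟨_, h⟩ | ⟨h, _⟩
        · exact h.symm
        · exact absurd h hj
      · rfl
    have hb_unc : ∀ j ∉ C, b j ≤ 2 := by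
      intro j hj
      rw [hb]; simp only
      split_ifs with h1 h2 h3
      · omega
      · omega
      · exact absurd h3.1 hj
      · omega
    set κ : Fin n → Lex (ℝ × Lex (ℕ × ℕ)) :=
      fun j => toLex (a j, toLex (b j, j.val)) with hκ
    have hκinj : Function.Injective κ := by
      intro j k h
      have : (ofLex ((ofLex (κ j)).2)).2 = (ofLex ((ofLex (κ k)).2)).2 := by rw [h]
      exact Fin.ext this
    have hκlt : ∀ j k, κ j < κ k ↔
        (a j < a k ∨ (a j = a k ∧ (b j < b k ∨ (b j = b k ∧ j.val < k.val)))) := by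
      intro j k
      rw [hκ]
      simp only
      rw [Prod.Lex.lt_iff]
      constructor
      · rintro (h | ⟨h1, h2⟩)
        · exact Or.inl h
        · rw [Prod.Lex.lt_iff] at h2
          exact Or.inr ⟨h1, h2⟩
      · rintro (h | ⟨h1, h2⟩)
        · exact Or.inl h
        · exact Or.inr ⟨h1, Prod.Lex.lt_iff.2 h2⟩
    obtain ⟨σ, hσlt, hσval⟩ := rank_perm κ hκinj
    refine ⟨σ, ⟨?_, ?_⟩, ?_⟩
    · -- condition (i)
      intro j k hjC hkC hlt
      rw [hσlt, hκlt]
      exact Or.inl (by rw [ha_unc j hjC, ha_unc k hkC]; exact hlt)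
    · -- condition (ii)
      intro j k hjC hkC hle
      rw [hσlt, hκlt]
      have hak : a k = if x k < x i then x i else x k := by
        rw [ha]; simp only
        split_ifs with h1 h2 h3
        · rfl
        · rcases h1 with ⟨h, _⟩ | ⟨_, h⟩
          · exact absurd hkC h
          · exact absurd h h2
        · exact absurd (Or.inr ⟨hkC, h3⟩) h1
        · rfl
      rw [ha_unc j hjC]
      by_cases hki : x k < x i
      · rw [hak, if_pos hki]
        exact Or.inl (lt_of_le_of_lt hle hki)
      · rw [hak, if_neg hki]
        rcases lt_or_eq_of_le hle with h | h
        · exact Or.inl h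
        · refine Or.inr ⟨h, Or.inl ?_⟩
          have hbk : b k = 3 := by
            rw [hb]; simp only
            have hkS : k ∉ S := by
              intro hkS
              rcases hSmem k hkS with ⟨h', _⟩ | ⟨_, h'⟩
              · exact h' hkC
              · exact hki h'
            rw [if_neg hkS, if_neg (fun hh : k = i => hi (hh ▸ hkC)),
              if_pos ⟨hkC, not_lt.1 hki⟩]
          rw [hbk]
          have := hb_unc j hjC
          omega
    · -- the rank value
      have hval : (σ i : ℕ) = Lset.card + m := by
        rw [hσval]
        have hai : a i = x i := ha_unc i hi
        have hbi : b i = 1 := by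
          simp [hb, hiS]
        have hfe : (univ.filter fun k => κ k < κ i) = Lset ∪ S := by
          ext k
          rw [mem_filter, mem_union, hLset, mem_filter]
          simp only [mem_univ, true_and]
          rw [hκlt, hai, hbi]
          constructor
          · rintro (h | ⟨h1, h2 | ⟨h2, h3⟩⟩)
            · -- a k < x i  ⇒  k uncensored below
              left
              have hPk : ¬ P k := by
                intro hPk
                rw [ha] at h; simp only at h
                rw [if_pos hPk] at h
                exact lt_irrefl _ h
              have hak : a k = x k := by
                rw [ha]; simp only; rw [if_neg hPk]
              rw [hak] at h
              refine ⟨?_, h⟩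
              intro hkC
              exact hPk (Or.inr ⟨hkC, h⟩)
            · -- b k < 1 ⇒ b k = 0 ⇒ k ∈ S
              right
              rw [hb] at h2; simp only at h2
              by_contra hkS
              rw [if_neg hkS] at h2
              split_ifs at h2 <;> omega
            · -- b k = 1 with k.val < i.val : impossible
              exfalso
              have hki : ¬ k = i := by
                intro h; rw [h] at h3; exact absurd h3 (lt_irrefl _)
              by_cases hs : k ∈ S
              · rw [hb] at h2; simp only [if_pos hs] at h2; omega
              · rw [hb] at h2; simp only [if_neg hs, if_neg hki] at h2
                split_ifs at h2 <;> omega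
          · rintro (⟨hkC, hlt⟩ | hkS)
            · left
              rw [ha_unc k hkC]; exact hlt
            · right
              have hPk : P k := hSmem k hkS
              have hak : a k = x i := by rw [ha]; simp only; rw [if_pos hPk]
              have hbk : b k = 0 := by rw [hb]; simp only; rw [if_pos hkS]
              exact ⟨hak, Or.inl (by omega)⟩
        have hdisj3 : Disjoint Lset S := by
          rw [Finset.disjoint_left]
          intro k hk hkS
          rw [hLset, mem_filter] at hk
          rcases hSmem k hkS with ⟨_, h⟩ | ⟨h, _⟩
          · exact absurd h (ne_of_lt hk.2.2)
          · exact hk.2.1 h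
        rw [hfe, Finset.card_union_of_disjoint hdisj3, hScard]
      omega
end
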